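/- For μ,ν ∈ (0,1) with μ ≠ ν, the derivative with respect to δ of H(δ) (as defined from the deletion-transformed parameters μ(δ), ν(δ)) equals [α(1−μ)ν / ((1−αδ)²(1−α))]·log[((μ−δα)(1−ν−δα))/((1−μ)ν)], where α = μ−ν, and this derivative is positive for all δ ∈ (0,1). -/

import Mathlib

/-- The binary entropy function (natural logarithm). -/
noncomputable def binEnt (a : ℝ) : ℝ := -(a * Real.log a) - (1 - a) * Real.log (1 - a)

lemma binEnt_hasDerivAt {x : ℝ} (h0 : 0 < x) (h1 : x < 1) :
    HasDerivAt binEnt (Real.log (1 - x) - Real.log x) x := by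
  have hx : x ≠ 0 := ne_of_gt h0
  have hx1 : (1 : ℝ) - x ≠ 0 := by linarith
  have A : HasDerivAt (fun y : ℝ => y * Real.log y) (Real.log x + 1) x :=
    Real.hasDerivAt_mul_log hx
  have Bf : HasDerivAt (fun y : ℝ => 1 - y) (-1 : ℝ) x := (hasDerivAt_id x).const_sub 1
  have B : HasDerivAt (fun y : ℝ => (1 - y) * Real.log (1 - y))
      ((Real.log (1 - x) + 1) * (-1)) x :=
    (Real.hasDerivAt_mul_log hx1).comp x Bf
  have C := A.neg.sub B
  exact C.congr_deriv (by ring)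

set_option maxHeartbeats 2000000 in
theorem stmt_9 (μ ν : ℝ) (hμ : μ ∈ Set.Ioo (0 : ℝ) 1) (hν : ν ∈ Set.Ioo (0 : ℝ) 1)
    (hne : μ ≠ ν) :
    ∀ δ ∈ Set.Ioo (0 : ℝ) 1,
      HasDerivAt
        (fun δ : ℝ =>
          (ν / (1 - μ + ν)) * binEnt ((μ - δ * (μ - ν)) / (1 - δ * (μ - ν))) +
            ((1 - μ) / (1 - μ + ν)) * binEnt (ν / (1 - δ * (μ - ν))))
        ((μ - ν) * (1 - μ) * ν / ((1 - (μ - ν) * δ) ^ 2 * (1 - (μ - ν))) *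
          Real.log ((μ - δ * (μ - ν)) * (1 - ν - δ * (μ - ν)) / ((1 - μ) * ν))) δ ∧
      0 < (μ - ν) * (1 - μ) * ν / ((1 - (μ - ν) * δ) ^ 2 * (1 - (μ - ν))) *
          Real.log ((μ - δ * (μ - ν)) * (1 - ν - δ * (μ - ν)) / ((1 - μ) * ν)) := by
  obtain ⟨hμ0, hμ1⟩ := hμ
  obtain ⟨hν0, hν1⟩ := hν
  intro δ hδ
  obtain ⟨hδ0, hδ1⟩ := hδ
  have hden : 0 < 1 - δ * (μ - ν) := by nlinarith
  have hnum : 0 < μ - δ * (μ - ν) := by nlinarith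
  have hnum2 : 0 < 1 - ν - δ * (μ - ν) := by nlinarith
  have h1a : 0 < 1 - μ + ν := by linarith
  have hden' : (1 : ℝ) - δ * (μ - ν) ≠ 0 := ne_of_gt hden
  -- bounds on transformed values
  have hm0 : 0 < (μ - δ * (μ - ν)) / (1 - δ * (μ - ν)) := div_pos hnum hden
  have hm1 : (μ - δ * (μ - ν)) / (1 - δ * (μ - ν)) < 1 := by
    rw [div_lt_one hden]; linarith
  have hn0 : 0 < ν / (1 - δ * (μ - ν)) := div_pos hν0 hden
  have hn1 : ν / (1 - δ * (μ - ν)) < 1 := by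
    rw [div_lt_one hden]; linarith
  -- derivatives of the inner maps
  have F1 : HasDerivAt (fun δ : ℝ => (μ - δ * (μ - ν)) / (1 - δ * (μ - ν)))
      (((-(μ - ν)) * (1 - δ * (μ - ν)) - (μ - δ * (μ - ν)) * (-(μ - ν))) /
        (1 - δ * (μ - ν)) ^ 2) δ := by
    have ha : HasDerivAt (fun δ : ℝ => μ - δ * (μ - ν)) (-(μ - ν)) δ := by
      have := ((hasDerivAt_id δ).mul_const (μ - ν)).const_sub μ
      exact this.congr_deriv (by ring)
    have hb : HasDerivAt (fun δ : ℝ => 1 - δ * (μ - ν)) (-(μ - ν)) δ := by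
      have := ((hasDerivAt_id δ).mul_const (μ - ν)).const_sub 1
      exact this.congr_deriv (by ring)
    exact ha.div hb hden'
  have F2 : HasDerivAt (fun δ : ℝ => ν / (1 - δ * (μ - ν)))
      ((0 * (1 - δ * (μ - ν)) - ν * (-(μ - ν))) / (1 - δ * (μ - ν)) ^ 2) δ := by
    have hb : HasDerivAt (fun δ : ℝ => 1 - δ * (μ - ν)) (-(μ - ν)) δ := by
      have := ((hasDerivAt_id δ).mul_const (μ - ν)).const_sub 1
      exact this.congr_deriv (by ring)
    exact (hasDerivAt_const δ ν).div hb hden'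
  have G1 := ((binEnt_hasDerivAt hm0 hm1).comp δ F1).const_mul (ν / (1 - μ + ν))
  have G2 := ((binEnt_hasDerivAt hn0 hn1).comp δ F2).const_mul ((1 - μ) / (1 - μ + ν))
  have G := G1.add G2
  simp only [Function.comp_def] at G
  -- rewrite 1 - m and 1 - n
  have e1 : 1 - (μ - δ * (μ - ν)) / (1 - δ * (μ - ν)) = (1 - μ) / (1 - δ * (μ - ν)) := by
    field_simp
    ring
  have e2 : 1 - ν / (1 - δ * (μ - ν)) = (1 - ν - δ * (μ - ν)) / (1 - δ * (μ - ν)) := by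
    field_simp
    ring
  rw [e1, e2] at G
  have hμ1' : (1 : ℝ) - μ ≠ 0 := by linarith
  have hν' : ν ≠ 0 := ne_of_gt hν0
  have hnum' : μ - δ * (μ - ν) ≠ 0 := ne_of_gt hnum
  have hnum2' : 1 - ν - δ * (μ - ν) ≠ 0 := ne_of_gt hnum2
  -- the derivative identity
  have key : (ν / (1 - μ + ν)) *
        ((Real.log ((1 - μ) / (1 - δ * (μ - ν))) -
            Real.log ((μ - δ * (μ - ν)) / (1 - δ * (μ - ν)))) *
          (((-(μ - ν)) * (1 - δ * (μ - ν)) - (μ - δ * (μ - ν)) * (-(μ - ν))) /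
            (1 - δ * (μ - ν)) ^ 2)) +
      ((1 - μ) / (1 - μ + ν)) *
        ((Real.log ((1 - ν - δ * (μ - ν)) / (1 - δ * (μ - ν))) -
            Real.log (ν / (1 - δ * (μ - ν)))) *
          ((0 * (1 - δ * (μ - ν)) - ν * (-(μ - ν))) / (1 - δ * (μ - ν)) ^ 2)) =
      (μ - ν) * (1 - μ) * ν / ((1 - (μ - ν) * δ) ^ 2 * (1 - (μ - ν))) *
        Real.log ((μ - δ * (μ - ν)) * (1 - ν - δ * (μ - ν)) / ((1 - μ) * ν)) := by
    rw [Real.log_div hμ1' hden', Real.log_div hnum' hden', Real.log_div hnum2' hden',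
      Real.log_div hν' hden', Real.log_div (mul_ne_zero hnum' hnum2') (mul_ne_zero hμ1' hν'),
      Real.log_mul hnum' hnum2', Real.log_mul hμ1' hν']
    have h2 : ((1 : ℝ) - (μ - ν) * δ) ^ 2 = (1 - δ * (μ - ν)) ^ 2 := by ring
    have h3 : (1 : ℝ) - (μ - ν) = 1 - μ + ν := by ring
    rw [h2, h3]
    generalize Real.log (1 - μ) = L3
    generalize Real.log (μ - δ * (μ - ν)) = L1
    generalize Real.log (1 - ν - δ * (μ - ν)) = L5
    generalize Real.log ν = L4
    generalize Real.log (1 - δ * (μ - ν)) = L2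
    have hpow : ((1:ℝ) - δ * (μ - ν)) ^ 2 ≠ 0 := pow_ne_zero 2 hden'
    have h1a' : (1 : ℝ) - μ + ν ≠ 0 := ne_of_gt h1a
    field_simp
    ring
  rw [key] at G
  refine ⟨G, ?_⟩
  -- positivity
  have hkey : (μ - δ * (μ - ν)) * (1 - ν - δ * (μ - ν)) - (1 - μ) * ν =
      (μ - ν) * (1 - δ) * (1 - (μ - ν) * δ) := by ring
  have hd2 : 0 < (1 - (μ - ν) * δ) ^ 2 * (1 - (μ - ν)) := by
    have h0 : (0:ℝ) < 1 - (μ - ν) := by linarith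
    have h' : (0:ℝ) < (1 - (μ - ν) * δ) ^ 2 := by
      have he : (1 : ℝ) - (μ - ν) * δ = 1 - δ * (μ - ν) := by ring
      rw [he]; exact pow_pos hden 2
    exact mul_pos h' h0
  have hμν : 0 < (1 - μ) * ν := mul_pos (by linarith) hν0
  rcases lt_or_gt_of_ne (sub_ne_zero_of_ne hne) with hlt | hgt
  · -- μ - ν < 0
    have hC : (μ - ν) * (1 - μ) * ν / ((1 - (μ - ν) * δ) ^ 2 * (1 - (μ - ν))) < 0 := by
      apply div_neg_of_neg_of_pos _ hd2
      have : 0 < (1 - μ) * ν := hμν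
      nlinarith
    have hR1 : (μ - δ * (μ - ν)) * (1 - ν - δ * (μ - ν)) < (1 - μ) * ν := by
      nlinarith [mul_pos (mul_pos (neg_pos.mpr hlt) (by linarith : (0:ℝ) < 1 - δ))
        (by nlinarith : (0:ℝ) < 1 - (μ - ν) * δ)]
    have hR0 : 0 < (μ - δ * (μ - ν)) * (1 - ν - δ * (μ - ν)) := mul_pos hnum hnum2
    have hlog : Real.log ((μ - δ * (μ - ν)) * (1 - ν - δ * (μ - ν)) / ((1 - μ) * ν)) < 0 := by
      apply Real.log_neg (div_pos hR0 hμν)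
      rw [div_lt_one hμν]; exact hR1
    exact mul_pos_of_neg_of_neg hC hlog
  · -- μ - ν > 0
    have hC : 0 < (μ - ν) * (1 - μ) * ν / ((1 - (μ - ν) * δ) ^ 2 * (1 - (μ - ν))) := by
      apply div_pos _ hd2
      nlinarith
    have hR1 : (1 - μ) * ν < (μ - δ * (μ - ν)) * (1 - ν - δ * (μ - ν)) := by
      nlinarith [mul_pos (mul_pos hgt (by linarith : (0:ℝ) < 1 - δ))
        (by nlinarith : (0:ℝ) < 1 - (μ - ν) * δ)]
    have hlog : 0 < Real.log ((μ - δ * (μ - ν)) * (1 - ν - δ * (μ - ν)) / ((1 - μ) * ν)) := by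
      apply Real.log_pos
      rw [lt_div_iff₀ hμν]; linarith
    exact mul_pos hC hlog
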